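/- arXiv:1912.09698 — 3 statements merged into one kernel-verified Lean document; each statement's English description precedes it below -/
import Mathlib

section
/- Let $w \in \mathbb{R}$, $k \ge 1$ an integer, $\alpha \in (-1,1)$, and let $g \in C^1[0,a]$ satisfy $g(0)=0$ and $g'(x)>0$ on $[0,a]$, with $g$ independent of $w$. If $f \in C[0,a]$ and $q$ solves the ODE $g(x)q'(x) + [k+\alpha + i w g(x)] g'(x) q(x) = f(x)$ on $(0,a]$ with $q(0)=0$, then there exists a constant $C$ depending only on $g$, $a$, $k$, $\alpha$ (independent of $w$) such that $\|q\|_\infty \le C \|f\|_\infty$. -/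
open Complex in
/-- For the singular ODE `g q' + (k+α+iwg) g' q = f` with `q 0 = 0`, there is a
constant `C` depending only on `g, a, k, α` (independent of `w`, `f`, `q`) such that
`‖q‖_∞ ≤ C ‖f‖_∞`. -/
theorem stmt_1 (a : ℝ) (ha : 0 < a) (k : ℕ) (hk : 1 ≤ k) (α : ℝ) (hα : α ∈ Set.Ioo (-1 : ℝ) 1)
    (g g' : ℝ → ℝ)
    (hderiv : ∀ x ∈ Set.Icc 0 a, HasDerivWithinAt g (g' x) (Set.Icc 0 a) x)
    (hgc : ContinuousOn g' (Set.Icc 0 a))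
    (hg0 : g 0 = 0) (hgpos : ∀ x ∈ Set.Icc 0 a, 0 < g' x) :
    ∃ C : ℝ, ∀ (w : ℝ) (f q : ℝ → ℂ) (q' : ℝ → ℂ),
      ContinuousOn f (Set.Icc 0 a) →
      ContinuousOn q (Set.Icc 0 a) →
      (∀ x ∈ Set.Ioc 0 a, HasDerivAt q (q' x) x) →
      (∀ x ∈ Set.Ioc 0 a,
        (g x : ℂ) * q' x + ((k : ℂ) + (α : ℂ) + I * (w : ℂ) * (g x : ℂ)) * (g' x : ℂ) * q x
          = f x) →
      q 0 = 0 →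
      ∀ M : ℝ, (∀ t ∈ Set.Icc 0 a, ‖f t‖ ≤ M) →
        ∀ x ∈ Set.Icc 0 a, ‖q x‖ ≤ C * M := by
  obtain ⟨hα1, hα2⟩ := hα
  set β : ℝ := (k : ℝ) + α with hβdef
  have hk1 : (1 : ℝ) ≤ (k : ℝ) := by exact_mod_cast hk
  have hβpos : 0 < β := by simp only [hβdef]; linarith
  -- continuity of g
  have hgcont : ContinuousOn g (Set.Icc 0 a) := fun x hx =>
    (hderiv x hx).continuousWithinAt
  -- minimum of g' on the compact interval
  obtain ⟨t0, ht0, hmin⟩ := isCompact_Icc.exists_isMinOn ⟨0, ⟨le_rfl, ha.le⟩⟩ hgc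
  set c : ℝ := g' t0 with hcdef
  have hcpos : 0 < c := hgpos t0 ht0
  have hcle : ∀ t ∈ Set.Icc 0 a, c ≤ g' t := fun t ht => hmin ht
  -- g is strictly monotone, hence positive on (0,a]
  have hmono : StrictMonoOn g (Set.Icc 0 a) := by
    apply strictMonoOn_of_hasDerivWithinAt_pos (convex_Icc 0 a) hgcont
    · intro x hx
      exact ((hderiv x (interior_subset hx)).mono interior_subset)
    · intro x hx
      exact hgpos x (interior_subset hx)
  have hgIoc : ∀ x ∈ Set.Ioc 0 a, 0 < g x := by
    intro x hx
    have := hmono ⟨le_rfl, ha.le⟩ ⟨hx.1.le, hx.2⟩ hx.1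
    rwa [hg0] at this
  -- interior derivative of g
  have hderivat : ∀ t ∈ Set.Ioo 0 a, HasDerivAt g (g' t) t := by
    intro t ht
    exact (hderiv t ⟨ht.1.le, ht.2.le⟩).hasDerivAt (Icc_mem_nhds ht.1 ht.2)
  refine ⟨1 / (β * c), ?_⟩
  intro w f q q' hfc hqc hq' hode hq0 M hM x hx
  have hM0 : 0 ≤ M := le_trans (norm_nonneg _) (hM 0 ⟨le_rfl, ha.le⟩)
  have hC0 : 0 ≤ 1 / (β * c) := by positivity
  rcases eq_or_lt_of_le hx.1 with hx0 | hx0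
  · rw [← hx0, hq0]; simpa using mul_nonneg hC0 hM0
  -- now 0 < x ≤ a
  set h : ℝ → ℂ := fun t => ((g t ^ β : ℝ) : ℂ) * Complex.exp (I * w * g t) * q t with hhdef
  set h' : ℝ → ℂ := fun t => ((g t ^ (β - 1) : ℝ) : ℂ) * Complex.exp (I * w * g t) * f t
    with hh'def
  set B : ℝ → ℝ := fun t => M / (β * c) * g t ^ β with hBdef
  set B' : ℝ → ℝ := fun t => M / c * (g t ^ (β - 1) * g' t) with hB'def
  -- derivative of h on the open interval
  have hβc : ((k : ℂ) + (α : ℂ)) = (β : ℂ) := by push_cast [hβdef]; ring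
  have hh' : ∀ t ∈ Set.Ioo 0 a, HasDerivAt h (h' t) t := by
    intro t ht
    have hgt : 0 < g t := hgIoc t ⟨ht.1, ht.2.le⟩
    have hgat : HasDerivAt g (g' t) t := hderivat t ht
    have d1 : HasDerivAt (fun s => g s ^ β) (g' t * β * g t ^ (β - 1)) t :=
      hgat.rpow_const (Or.inl hgt.ne')
    have d1c : HasDerivAt (fun s => ((g s ^ β : ℝ) : ℂ))
        ((g' t * β * g t ^ (β - 1) : ℝ) : ℂ) t := d1.ofReal_comp
    have d2 : HasDerivAt (fun s => I * (w : ℂ) * ((g s : ℝ) : ℂ))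
        (I * (w : ℂ) * ((g' t : ℝ) : ℂ)) t := hgat.ofReal_comp.const_mul (I * (w : ℂ))
    have d2e : HasDerivAt (fun s => Complex.exp (I * (w : ℂ) * ((g s : ℝ) : ℂ)))
        (Complex.exp (I * (w : ℂ) * ((g t : ℝ) : ℂ)) * (I * (w : ℂ) * ((g' t : ℝ) : ℂ))) t :=
      d2.cexp
    have dq : HasDerivAt q (q' t) t := hq' t ⟨ht.1, ht.2.le⟩
    have dh := (d1c.mul d2e).mul dq
    have hodet := hode t ⟨ht.1, ht.2.le⟩
    rw [hβc] at hodet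
    have hpow : ((g t ^ β : ℝ) : ℂ) = ((g t ^ (β - 1) : ℝ) : ℂ) * ((g t : ℝ) : ℂ) := by
      rw [← Complex.ofReal_mul]
      congr 1
      rw [← Real.rpow_add_one hgt.ne' (β - 1)]
      ring_nf
    refine HasDerivAt.congr_deriv (f := h) dh ?_
    simp only [hh'def, ← hodet, hpow, Pi.mul_apply]
    push_cast
    ring
  -- bound on the derivative of h
  have hbound : ∀ t ∈ Set.Ioo 0 a, ‖h' t‖ ≤ B' t := by
    intro t ht
    have hgt : 0 < g t := hgIoc t ⟨ht.1, ht.2.le⟩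
    have hexp : ‖Complex.exp (I * (w : ℂ) * ((g t : ℝ) : ℂ))‖ = 1 := by
      rw [Complex.norm_exp]
      simp [Complex.exp_eq_one_iff]
    have hnorm : ‖h' t‖ = g t ^ (β - 1) * ‖f t‖ := by
      simp only [hh'def, norm_mul, hexp, Complex.norm_real, Real.norm_eq_abs,
        _root_.abs_of_nonneg (Real.rpow_nonneg hgt.le _), mul_one]
    rw [hnorm, hB'def]
    have h1 : g t ^ (β - 1) * ‖f t‖ ≤ g t ^ (β - 1) * M :=
      mul_le_mul_of_nonneg_left (hM t ⟨ht.1.le, ht.2.le⟩) (Real.rpow_nonneg hgt.le _)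
    refine h1.trans ?_
    have h2 : c ≤ g' t := hcle t ⟨ht.1.le, ht.2.le⟩
    have h3 : g t ^ (β - 1) * c ≤ g t ^ (β - 1) * g' t :=
      mul_le_mul_of_nonneg_left h2 (Real.rpow_nonneg hgt.le _)
    calc g t ^ (β - 1) * M = M / c * (g t ^ (β - 1) * c) := by field_simp
      _ ≤ M / c * (g t ^ (β - 1) * g' t) :=
        mul_le_mul_of_nonneg_left h3 (by positivity)
  -- derivative of B on the open interval
  have hB' : ∀ t ∈ Set.Ioo 0 a, HasDerivAt B (B' t) t := by
    intro t ht
    have hgt : 0 < g t := hgIoc t ⟨ht.1, ht.2.le⟩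
    have d1 : HasDerivAt (fun s => g s ^ β) (g' t * β * g t ^ (β - 1)) t :=
      (hderivat t ht).rpow_const (Or.inl hgt.ne')
    have := d1.const_mul (M / (β * c))
    refine HasDerivAt.congr_deriv (f := B) this ?_
    simp only [hB'def]
    field_simp
  -- continuity of h on [0,a]
  have hhcont : ContinuousOn h (Set.Icc 0 a) := by
    apply ContinuousOn.mul
    apply ContinuousOn.mul
    · exact Complex.continuous_ofReal.comp_continuousOn
        (hgcont.rpow_const (fun t _ => Or.inr hβpos.le))
    · exact Complex.continuous_exp.comp_continuousOn
        (continuousOn_const.mul (Complex.continuous_ofReal.comp_continuousOn hgcont))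
    · exact hqc
  -- continuity of B on [0,a]
  have hBcont : ContinuousOn B (Set.Icc 0 a) := by
    exact continuousOn_const.mul (hgcont.rpow_const (fun t _ => Or.inr hβpos.le))
  -- key estimate for each ε ∈ (0, x)
  have hkey : ∀ ε ∈ Set.Ioo 0 x, ‖h x‖ ≤ B x + (‖h ε‖ - B ε) := by
    intro ε hε
    have hsub : Set.Icc ε x ⊆ Set.Icc 0 a :=
      Set.Icc_subset_Icc hε.1.le hx.2
    have := image_norm_le_of_norm_deriv_right_le_deriv_boundary'
      (f := h) (f' := h') (a := ε) (b := x)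
      (hhcont.mono hsub)
      (fun t ht => (hh' t ⟨lt_of_lt_of_le hε.1 ht.1, lt_of_lt_of_le ht.2 hx.2⟩).hasDerivWithinAt)
      (B := fun t => B t + (‖h ε‖ - B ε)) (B' := B')
      (by simp)
      ((hBcont.mono hsub).add continuousOn_const)
      (fun t ht => ((hB' t ⟨lt_of_lt_of_le hε.1 ht.1,
        lt_of_lt_of_le ht.2 hx.2⟩).add_const _).hasDerivWithinAt)
      (fun t ht => hbound t ⟨lt_of_lt_of_le hε.1 ht.1, lt_of_lt_of_le ht.2 hx.2⟩)
    exact this ⟨hε.2.le, le_rfl⟩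
  -- take the limit ε → 0⁺
  have hB0 : B 0 = 0 := by
    simp [hBdef, hg0, Real.zero_rpow hβpos.ne']
  have hh0 : h 0 = 0 := by simp [hhdef, hq0]
  have htend : Filter.Tendsto (fun ε => B x + (‖h ε‖ - B ε)) (nhdsWithin 0 (Set.Ioi 0))
      (nhds (B x)) := by
    have hle : nhdsWithin 0 (Set.Ioi (0 : ℝ)) ≤ nhdsWithin 0 (Set.Icc 0 a) := by
      rw [← nhdsWithin_Ioc_eq_nhdsGT ha]
      exact nhdsWithin_mono 0 Set.Ioc_subset_Icc_self
    have h1 : Filter.Tendsto (fun ε => ‖h ε‖) (nhdsWithin 0 (Set.Ioi 0)) (nhds 0) := by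
      have h1' : Filter.Tendsto (fun ε => ‖h ε‖) (nhdsWithin 0 (Set.Icc 0 a)) (nhds ‖h 0‖) :=
        (hhcont 0 ⟨le_rfl, ha.le⟩).norm
      rw [hh0, norm_zero] at h1'
      exact h1'.mono_left hle
    have h2 : Filter.Tendsto B (nhdsWithin 0 (Set.Ioi 0)) (nhds 0) := by
      have h2' : Filter.Tendsto B (nhdsWithin 0 (Set.Icc 0 a)) (nhds (B 0)) :=
        hBcont 0 ⟨le_rfl, ha.le⟩
      rw [hB0] at h2'
      exact h2'.mono_left hle
    have := Filter.Tendsto.add (tendsto_const_nhds (x := B x)) (h1.sub h2)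
    simpa using this
  have hhx : ‖h x‖ ≤ B x := by
    refine ge_of_tendsto htend ?_
    filter_upwards [Ioo_mem_nhdsGT hx0] with ε hε
    exact hkey ε hε
  -- conclude
  have hgx : 0 < g x := hgIoc x ⟨hx0, hx.2⟩
  have hexp : ‖Complex.exp (I * (w : ℂ) * ((g x : ℝ) : ℂ))‖ = 1 := by
    rw [Complex.norm_exp]
    simp
  have hnormh : ‖h x‖ = g x ^ β * ‖q x‖ := by
    simp only [hhdef, norm_mul, hexp, Complex.norm_real, Real.norm_eq_abs,
      _root_.abs_of_nonneg (Real.rpow_nonneg hgx.le _), mul_one]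
  rw [hnormh, hBdef] at hhx
  have hpow : 0 < g x ^ β := Real.rpow_pos_of_pos hgx β
  have : ‖q x‖ ≤ M / (β * c) := by
    nlinarith [hpow, hhx, norm_nonneg (q x)]
  calc ‖q x‖ ≤ M / (β * c) := this
    _ = 1 / (β * c) * M := by ring
end

section
/- (van der Corput-type bound with algebraic singularity) Let $\alpha \in (-1,\infty)$ and $\eta \in C^1[0,a]$. Then there is a constant $C$ depending only on $\alpha$ and $a$ (not on $w$ or $\eta$) such that for all $w \ge 1$, $\left|\int_0^a \eta(x)\, x^\alpha e^{i w x}\,dx\right| \le C\, w^{-\min\{1+\alpha,\,1\}}\left(|\eta(a)| + \int_0^a |\eta'(x)|\,dx\right)$. -/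
open Complex MeasureTheory Set intervalIntegral

namespace Stmt9Aux

noncomputable def g (α w x : ℝ) : ℂ := ((x ^ α : ℝ) : ℂ) * Complex.exp (I * w * x)

lemma norm_exp_Iwx (w x : ℝ) : ‖Complex.exp (I * w * x)‖ = 1 := by
  rw [Complex.norm_exp]
  simp

lemma norm_g (α w : ℝ) {x : ℝ} (hx : 0 ≤ x) : ‖g α w x‖ = x ^ α := by
  rw [g, norm_mul, norm_exp_Iwx, mul_one, Complex.norm_real, Real.norm_eq_abs,
    _root_.abs_of_nonneg (Real.rpow_nonneg hx α)]

lemma cont_exp (w : ℝ) : Continuous fun x : ℝ => Complex.exp (I * w * x) := by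
  fun_prop

lemma intInt_g {α : ℝ} (hα : -1 < α) (w c d : ℝ) :
    IntervalIntegrable (g α w) volume c d := by
  have h1 : IntervalIntegrable (fun x : ℝ => ((x ^ α : ℝ) : ℂ)) volume c d := by
    have h0 := intervalIntegral.intervalIntegrable_rpow' (a := c) (b := d) hα
    rw [intervalIntegrable_iff] at h0 ⊢
    exact h0.ofReal
  exact h1.mul_continuousOn (cont_exp w).continuousOn

lemma contAt_g (α w : ℝ) {x : ℝ} (hx : x ≠ 0) : ContinuousAt (g α w) x := by
  exact (Complex.continuous_ofReal.continuousAt.comp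
    (Real.continuousAt_rpow_const x α (Or.inl hx))).mul (cont_exp w).continuousAt

lemma smaf (α w : ℝ) {x : ℝ} (hx : 0 < x) :
    StronglyMeasurableAtFilter (g α w) (nhds x) volume :=
  ⟨Set.Ioi 0, Ioi_mem_nhds hx, ContinuousOn.aestronglyMeasurable
    (fun y hy => (contAt_g α w (ne_of_gt hy)).continuousWithinAt) measurableSet_Ioi⟩

lemma hasDerivAt_G {α : ℝ} (hα : -1 < α) (w : ℝ) {x : ℝ} (hx : 0 < x) :
    HasDerivAt (fun t => ∫ u in (0:ℝ)..t, g α w u) (g α w x) x :=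
  intervalIntegral.integral_hasDerivAt_right (intInt_g hα w 0 x)
    (smaf α w hx) (contAt_g α w hx.ne')

lemma G_small {α : ℝ} (hα : -1 < α) {w : ℝ} (hw : 1 ≤ w) {u : ℝ} (hu0 : 0 ≤ u)
    (hu : u ≤ 1 / w) :
    ‖∫ x in (0:ℝ)..u, g α w x‖ ≤ w ^ (-(1 + α)) / (1 + α) := by
  have h1 : (0:ℝ) < 1 + α := by linarith
  have hw0 : (0:ℝ) < w := lt_of_lt_of_le one_pos hw
  calc ‖∫ x in (0:ℝ)..u, g α w x‖ ≤ ∫ x in (0:ℝ)..u, ‖g α w x‖ :=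
        intervalIntegral.norm_integral_le_integral_norm hu0
    _ = ∫ x in (0:ℝ)..u, x ^ α := by
        apply intervalIntegral.integral_congr
        intro x hx
        rw [uIcc_of_le hu0] at hx
        exact norm_g α w hx.1
    _ = u ^ (α + 1) / (α + 1) := by
        rw [integral_rpow (Or.inl hα), Real.zero_rpow (by linarith), sub_zero]
    _ ≤ (1 / w) ^ (α + 1) / (α + 1) := by
        have h2 := Real.rpow_le_rpow hu0 hu (by linarith : (0:ℝ) ≤ α + 1)
        exact (div_le_div_iff_of_pos_right (by linarith)).mpr h2
    _ = w ^ (-(1 + α)) / (1 + α) := by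
        rw [show α + 1 = 1 + α from add_comm α 1, one_div, Real.inv_rpow hw0.le,
          ← Real.rpow_neg hw0.le]


lemma osc_bound {α : ℝ} (hα : -1 < α) {w : ℝ} (hw : 1 ≤ w) {t : ℝ} (ht : 1 / w ≤ t) :
    ‖∫ x in (1/w)..t, g α w x‖ ≤ 2 * (t ^ α + (1/w) ^ α) / w := by
  have hw0 : (0:ℝ) < w := lt_of_lt_of_le one_pos hw
  have hc0 : (0:ℝ) < 1/w := by positivity
  have ht0 : (0:ℝ) < t := lt_of_lt_of_le hc0 ht
  have hIw : (I * (w:ℂ)) ≠ 0 := by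
    apply mul_ne_zero I_ne_zero
    exact_mod_cast hw0.ne'
  have hpos : ∀ x ∈ Set.uIcc (1/w) t, 0 < x := by
    intro x hx
    rw [uIcc_of_le ht] at hx
    exact lt_of_lt_of_le hc0 hx.1
  have hnormv : ∀ x : ℝ, ‖Complex.exp (I * w * x) * (I * w)⁻¹‖ = 1 / w := by
    intro x
    rw [norm_mul, norm_exp_Iwx, one_mul, norm_inv, norm_mul, Complex.norm_I, one_mul,
      Complex.norm_real, Real.norm_eq_abs, _root_.abs_of_pos hw0, one_div]
  -- integration by parts
  have hIBP := intervalIntegral.integral_mul_deriv_eq_deriv_mul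
    (u := fun x : ℝ => ((x ^ α : ℝ) : ℂ)) (u' := fun x : ℝ => ((α * x ^ (α - 1) : ℝ) : ℂ))
    (v := fun x : ℝ => Complex.exp (I * w * x) * (I * w)⁻¹)
    (v' := fun x : ℝ => Complex.exp (I * w * x)) (a := 1/w) (b := t)
    (fun x hx => ((Real.hasDerivAt_rpow_const (Or.inl (hpos x hx).ne')).ofReal_comp))
    (fun x hx => by
      have h1 : HasDerivAt (fun y : ℝ => I * (w:ℂ) * (y:ℂ)) (I * w) x := by
        simpa using (Complex.ofRealCLM.hasDerivAt (x := x)).const_mul (I * (w:ℂ))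
      have h2 := (h1.cexp).mul_const (I * (w:ℂ))⁻¹
      have h3 : Complex.exp (I * w * x) * (I * w) * (I * w)⁻¹ = Complex.exp (I * w * x) := by
        rw [mul_assoc, mul_inv_cancel₀ hIw, mul_one]
      rw [h3] at h2
      exact h2)
    (by
      apply ContinuousOn.intervalIntegrable
      intro x hx
      exact (Complex.continuous_ofReal.continuousAt.comp
        (continuousAt_const.mul
          (Real.continuousAt_rpow_const x (α-1) (Or.inl (hpos x hx).ne')))).continuousWithinAt)
    ((cont_exp w).intervalIntegrable _ _)
  have hnorm_u'v : ‖∫ x in (1/w)..t, ((α * x ^ (α - 1) : ℝ) : ℂ)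
      * (Complex.exp (I * w * x) * (I * w)⁻¹)‖ ≤ (t ^ α + (1/w) ^ α) / w := by
    have key : |α| * ∫ x in (1/w)..t, x ^ (α - 1) ≤ t ^ α + (1/w) ^ α := by
      rcases eq_or_ne α 0 with h0 | h0
      · simp only [h0, abs_zero, zero_mul]
        positivity
      · rw [integral_rpow (Or.inr ⟨by simpa using sub_ne_zero.mpr h0, fun hmem =>
          (hpos 0 hmem).false⟩), sub_add_cancel]
        calc |α| * ((t ^ α - (1/w) ^ α) / α) ≤ |(|α| * ((t ^ α - (1/w) ^ α) / α))| :=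
              le_abs_self _
          _ = |t ^ α - (1/w) ^ α| := by
              rw [abs_mul, _root_.abs_abs, abs_div]
              field_simp
          _ ≤ |t ^ α| + |(1/w) ^ α| := abs_sub _ _
          _ = t ^ α + (1/w) ^ α := by
              rw [_root_.abs_of_nonneg (Real.rpow_nonneg ht0.le α),
                _root_.abs_of_nonneg (Real.rpow_nonneg hc0.le α)]
    calc ‖∫ x in (1/w)..t, ((α * x ^ (α - 1) : ℝ) : ℂ)
        * (Complex.exp (I * w * x) * (I * w)⁻¹)‖
        ≤ ∫ x in (1/w)..t, ‖((α * x ^ (α - 1) : ℝ) : ℂ)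
          * (Complex.exp (I * w * x) * (I * w)⁻¹)‖ :=
          intervalIntegral.norm_integral_le_integral_norm ht
      _ = ∫ x in (1/w)..t, |α| * x ^ (α - 1) * (1/w) := by
          apply intervalIntegral.integral_congr
          intro x hx
          simp only [norm_mul, hnormv, Complex.norm_real, Real.norm_eq_abs, abs_mul]
          rw [_root_.abs_of_nonneg (Real.rpow_nonneg (hpos x hx).le (α-1))]
      _ = (|α| * ∫ x in (1/w)..t, x ^ (α - 1)) * (1/w) := by
          rw [← intervalIntegral.integral_const_mul, ← intervalIntegral.integral_mul_const]
      _ ≤ (t ^ α + (1/w) ^ α) * (1/w) := by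
          apply mul_le_mul_of_nonneg_right key hc0.le
      _ = (t ^ α + (1/w) ^ α) / w := by ring
  -- assemble
  have hg_eq : (∫ x in (1/w)..t, g α w x)
      = ((t ^ α : ℝ) : ℂ) * (Complex.exp (I * w * t) * (I * w)⁻¹)
        - (((1/w) ^ α : ℝ) : ℂ) * (Complex.exp (I * w * ((1/w : ℝ) : ℂ)) * (I * w)⁻¹)
        - ∫ x in (1/w)..t, ((α * x ^ (α - 1) : ℝ) : ℂ)
            * (Complex.exp (I * w * x) * (I * w)⁻¹) := hIBP
  rw [hg_eq]
  have h1 : ‖((t ^ α : ℝ) : ℂ) * (Complex.exp (I * w * t) * (I * w)⁻¹)‖ = t ^ α / w := by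
    rw [norm_mul, hnormv, Complex.norm_real, Real.norm_eq_abs,
      _root_.abs_of_nonneg (Real.rpow_nonneg ht0.le α)]
    ring
  have h2 : ‖(((1/w) ^ α : ℝ) : ℂ) * (Complex.exp (I * w * ((1/w : ℝ) : ℂ)) * (I * w)⁻¹)‖
      = (1/w) ^ α / w := by
    rw [norm_mul, hnormv, Complex.norm_real, Real.norm_eq_abs,
      _root_.abs_of_nonneg (Real.rpow_nonneg hc0.le α)]
    ring
  refine le_trans (norm_sub_le _ _) ?_
  refine le_trans (add_le_add (le_trans (norm_sub_le _ _) (le_of_eq (by rw [h1, h2])))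
    hnorm_u'v) ?_
  exact le_of_eq (by ring)


lemma G_bound {α a : ℝ} (hα : -1 < α) (ha : 0 < a) {w : ℝ} (hw : 1 ≤ w) {t : ℝ}
    (ht0 : 0 ≤ t) (hta : t ≤ a) :
    ‖∫ x in (0:ℝ)..t, g α w x‖
      ≤ (1 / (1 + α) + 2 * a ^ α + 6) * w ^ (-(min (1 + α) 1)) := by
  have h1 : (0:ℝ) < 1 + α := by linarith
  have hw0 : (0:ℝ) < w := lt_of_lt_of_le one_pos hw
  set m := min (1 + α) 1 with hm
  have hm1 : m ≤ 1 := min_le_right _ _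
  have hm2 : m ≤ 1 + α := min_le_left _ _
  have hwm : (0:ℝ) < w ^ (-m) := Real.rpow_pos_of_pos hw0 _
  have hA : w ^ (-(1 + α)) ≤ w ^ (-m) :=
    Real.rpow_le_rpow_of_exponent_le hw (by linarith)
  have hB : w ^ (-(1:ℝ)) ≤ w ^ (-m) :=
    Real.rpow_le_rpow_of_exponent_le hw (by linarith)
  have haα : (0:ℝ) < a ^ α := Real.rpow_pos_of_pos ha _
  rcases le_or_gt t (1 / w) with hcase | hcase
  · -- t small
    calc ‖∫ x in (0:ℝ)..t, g α w x‖ ≤ w ^ (-(1 + α)) / (1 + α) :=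
          G_small hα hw ht0 hcase
      _ ≤ w ^ (-m) / (1 + α) := by gcongr
      _ = 1 / (1 + α) * w ^ (-m) := by ring
      _ ≤ (1 / (1 + α) + 2 * a ^ α + 6) * w ^ (-m) := by nlinarith
  · -- t large: split the integral
    have hc0 : (0:ℝ) < 1 / w := by positivity
    have hsplit : (∫ x in (0:ℝ)..t, g α w x)
        = (∫ x in (0:ℝ)..(1/w), g α w x) + ∫ x in (1/w)..t, g α w x :=
      (intervalIntegral.integral_add_adjacent_intervals (intInt_g hα w 0 (1/w))
        (intInt_g hα w (1/w) t)).symm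
    have hb1 : ‖∫ x in (0:ℝ)..(1/w), g α w x‖ ≤ w ^ (-(1 + α)) / (1 + α) :=
      G_small hα hw hc0.le le_rfl
    have hb2 : ‖∫ x in (1/w)..t, g α w x‖ ≤ 2 * (t ^ α + (1/w) ^ α) / w :=
      osc_bound hα hw hcase.le
    have hwinv : (1/w : ℝ) ^ α = w ^ (-α) := by
      rw [one_div, Real.inv_rpow hw0.le, ← Real.rpow_neg hw0.le]
    have hb3 : 2 * (t ^ α + (1/w) ^ α) / w ≤ (2 * a ^ α + 6) * w ^ (-m) := by
      rcases le_or_gt 0 α with hα0 | hα0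
      · -- α ≥ 0
        have e1 : t ^ α ≤ a ^ α := Real.rpow_le_rpow ht0 hta hα0
        have e2 : (1/w : ℝ) ^ α ≤ 1 := by
          rw [hwinv]
          exact Real.rpow_le_one_of_one_le_of_nonpos hw (by linarith)
        have e3 : (1/w : ℝ) ≤ w ^ (-m) := by
          rw [one_div, ← Real.rpow_neg_one w]
          exact hB
        calc 2 * (t ^ α + (1/w) ^ α) / w = 2 * (t ^ α + (1/w) ^ α) * (1/w) := by ring
          _ ≤ (2 * a ^ α + 2) * w ^ (-m) := by
              apply mul_le_mul (by nlinarith) e3 hc0.le (by nlinarith)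
          _ ≤ (2 * a ^ α + 6) * w ^ (-m) := by nlinarith
      · -- α < 0
        have e1 : t ^ α ≤ (1/w) ^ α :=
          Real.rpow_le_rpow_of_nonpos hc0 hcase.le hα0.le
        have e4 : 2 * (t ^ α + (1/w) ^ α) / w ≤ 4 * w ^ (-α) * (1/w) := by
          rw [← hwinv]
          have := Real.rpow_pos_of_pos hc0 α
          calc 2 * (t ^ α + (1/w) ^ α) / w ≤ 2 * ((1/w)^α + (1/w) ^ α) / w := by
                gcongr
            _ = 4 * (1/w) ^ α * (1/w) := by ring
        have e5 : (4:ℝ) * w ^ (-α) * (1/w) = 4 * w ^ (-(1+α)) := by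
          rw [one_div, ← Real.rpow_neg_one w, mul_assoc, ← Real.rpow_add hw0,
            show -α + -1 = -(1+α) by ring]
        calc 2 * (t ^ α + (1/w) ^ α) / w ≤ 4 * w ^ (-(1+α)) := by rw [← e5]; exact e4
          _ ≤ 4 * w ^ (-m) := by gcongr
          _ ≤ (2 * a ^ α + 6) * w ^ (-m) := by nlinarith
    calc ‖∫ x in (0:ℝ)..t, g α w x‖
        ≤ ‖∫ x in (0:ℝ)..(1/w), g α w x‖ + ‖∫ x in (1/w)..t, g α w x‖ := by
          rw [hsplit]; exact norm_add_le _ _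
      _ ≤ w ^ (-(1 + α)) / (1 + α) + (2 * a ^ α + 6) * w ^ (-m) :=
          add_le_add hb1 (le_trans hb2 hb3)
      _ ≤ 1 / (1 + α) * w ^ (-m) + (2 * a ^ α + 6) * w ^ (-m) := by
          gcongr
          calc w ^ (-(1 + α)) / (1 + α) ≤ w ^ (-m) / (1 + α) := by gcongr
            _ = 1 / (1 + α) * w ^ (-m) := by ring
      _ = (1 / (1 + α) + 2 * a ^ α + 6) * w ^ (-m) := by ring

end Stmt9Aux


open Complex in
/-- van der Corput-type bound with algebraic singularity: there is a constant
`C` depending only on `α` and `a` such that for all `w ≥ 1` and all `η ∈ C¹[0,a]`,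
`|∫_0^a η(x) x^α e^{iwx} dx| ≤ C w^{-min(1+α,1)} (|η(a)| + ∫_0^a |η'(x)| dx)`. -/
theorem stmt_9 (a : ℝ) (ha : 0 < a) (α : ℝ) (hα : -1 < α) :
    ∃ C : ℝ, 0 < C ∧ ∀ (w : ℝ), 1 ≤ w → ∀ (η η' : ℝ → ℂ),
      (∀ x ∈ Set.Icc 0 a, HasDerivWithinAt η (η' x) (Set.Icc 0 a) x) →
      ContinuousOn η' (Set.Icc 0 a) →
      ‖∫ x in (0 : ℝ)..a, η x * ((x ^ α : ℝ) : ℂ) * Complex.exp (I * (w : ℂ) * (x : ℂ))‖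
        ≤ C * w ^ (-(min (1 + α) 1)) * (‖η a‖ + ∫ x in (0 : ℝ)..a, ‖η' x‖) := by
  open Stmt9Aux MeasureTheory Set intervalIntegral in
  have h1 : (0:ℝ) < 1 + α := by linarith
  have haα : (0:ℝ) < a ^ α := Real.rpow_pos_of_pos ha _
  set C : ℝ := 1 / (1 + α) + 2 * a ^ α + 6 with hC
  have hCpos : 0 < C := by
    have : (0:ℝ) < 1 / (1 + α) := by positivity
    rw [hC]; linarith
  refine ⟨C, hCpos, ?_⟩
  intro w hw η η' hη hη'c
  have hw0 : (0:ℝ) < w := lt_of_lt_of_le one_pos hw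
  set m := min (1 + α) 1 with hm
  have hwm : (0:ℝ) < w ^ (-m) := Real.rpow_pos_of_pos hw0 _
  set G : ℝ → ℂ := fun t => ∫ x in (0:ℝ)..t, Stmt9Aux.g α w x with hG
  have huIcc : Set.uIcc (0:ℝ) a = Set.Icc 0 a := Set.uIcc_of_le ha.le
  have hGb : ∀ t, 0 ≤ t → t ≤ a → ‖G t‖ ≤ C * w ^ (-m) :=
    fun t ht0 hta => Stmt9Aux.G_bound hα ha hw ht0 hta
  have hGcont : ContinuousOn G (Set.Icc 0 a) := by
    rw [← huIcc]
    exact intervalIntegral.continuousOn_primitive_interval'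
      (Stmt9Aux.intInt_g hα w 0 a) Set.left_mem_uIcc
  have hηcont : ContinuousOn η (Set.Icc 0 a) := fun x hx => (hη x hx).continuousWithinAt
  have hIBP := intervalIntegral.integral_mul_deriv_eq_deriv_mul_of_hasDeriv_right
    (u := η) (v := G) (u' := η') (v' := Stmt9Aux.g α w) (a := 0) (b := a)
    (by rwa [huIcc]) (by rwa [huIcc])
    (fun x hx => by
      rw [min_eq_left ha.le, max_eq_right ha.le] at hx
      exact ((hη x ⟨hx.1.le, hx.2.le⟩).hasDerivAt
        (Icc_mem_nhds hx.1 hx.2)).hasDerivWithinAt)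
    (fun x hx => by
      rw [min_eq_left ha.le, max_eq_right ha.le] at hx
      exact (Stmt9Aux.hasDerivAt_G hα w hx.1).hasDerivWithinAt)
    (by rw [← huIcc] at hη'c; exact hη'c.intervalIntegrable)
    (Stmt9Aux.intInt_g hα w 0 a)
  have hG0 : G 0 = 0 := intervalIntegral.integral_same
  have hLHS : (∫ x in (0:ℝ)..a, η x * ((x ^ α : ℝ) : ℂ) * Complex.exp (I * w * x))
      = η a * G a - ∫ x in (0:ℝ)..a, η' x * G x := by
    have : (∫ x in (0:ℝ)..a, η x * ((x ^ α : ℝ) : ℂ) * Complex.exp (I * w * x))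
        = ∫ x in (0:ℝ)..a, η x * Stmt9Aux.g α w x := by
      apply intervalIntegral.integral_congr
      intro x hx
      simp only [Stmt9Aux.g, mul_assoc]
    rw [this, hIBP, hG0, mul_zero, sub_zero]
  rw [hLHS]
  have hnormint : ‖∫ x in (0:ℝ)..a, η' x * G x‖
      ≤ (∫ x in (0:ℝ)..a, ‖η' x‖) * (C * w ^ (-m)) := by
    calc ‖∫ x in (0:ℝ)..a, η' x * G x‖ ≤ ∫ x in (0:ℝ)..a, ‖η' x * G x‖ :=
          intervalIntegral.norm_integral_le_integral_norm ha.le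
      _ ≤ ∫ x in (0:ℝ)..a, ‖η' x‖ * (C * w ^ (-m)) := by
          apply intervalIntegral.integral_mono_on ha.le
          · apply ContinuousOn.intervalIntegrable
            rw [huIcc]
            exact (hη'c.mul hGcont).norm
          · apply ContinuousOn.intervalIntegrable
            rw [huIcc]
            exact hη'c.norm.mul continuousOn_const
          · intro x hx
            rw [norm_mul]
            exact mul_le_mul_of_nonneg_left (hGb x hx.1 hx.2) (norm_nonneg _)
      _ = (∫ x in (0:ℝ)..a, ‖η' x‖) * (C * w ^ (-m)) :=
          intervalIntegral.integral_mul_const _ _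
  calc ‖η a * G a - ∫ x in (0:ℝ)..a, η' x * G x‖
      ≤ ‖η a * G a‖ + ‖∫ x in (0:ℝ)..a, η' x * G x‖ := norm_sub_le _ _
    _ ≤ ‖η a‖ * (C * w ^ (-m)) + (∫ x in (0:ℝ)..a, ‖η' x‖) * (C * w ^ (-m)) := by
        apply add_le_add _ hnormint
        rw [norm_mul]
        exact mul_le_mul_of_nonneg_left (hGb a ha.le le_rfl) (norm_nonneg _)
    _ = C * w ^ (-m) * (‖η a‖ + ∫ x in (0:ℝ)..a, ‖η' x‖) := by ring
end

section
/- Let $a>0$, $\alpha \in (-1,1)\setminus\{0\}$, $w \ne 0$, and suppose $g \in C^1[0,a]$ with $g(0)=0$ and $g'>0$ on $[0,a]$. Suppose $q_1 \in C^1[0,a]$, $c_0 \in \mathbb{C}$, and $h \in C^1(0,a] \cap C[0,a]$ with $h(0)=0$ satisfies $h'(x) + i w g'(x) h(x) + \alpha c_0 g'(x)\frac{1-e^{-iwg(x)}}{g(x)^{1-\alpha}} = 0$ on $(0,a]$. Define $P(x) = \left[g(x)^{1+\alpha} q_1(x) + c_0 (1-e^{-iwg(x)}) g(x)^{\alpha}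 + h(x)\right] e^{iwg(x)}$. Then $P(a) - P(0) = \int_0^a \mathcal{W}[c_0, q_1](x)\, g(x)^\alpha e^{iwg(x)}\,dx$, where $\mathcal{W}[c_0,q_1](x) := i w g'(x) c_0 + g(x) q_1'(x) + [1+\alpha+iwg(x)] g'(x) q_1(x)$. -/
open Complex in
/-- with `P = [g^{1+α} q₁ + c₀(1-e^{-iwg})g^α + h] e^{iwg}` and `h` solving the
singular ODE with `h 0 = 0`, one has
`P(a) - P(0) = ∫_0^a 𝒲[c₀,q₁](x) g(x)^α e^{iwg(x)} dx`, where
`𝒲[c₀,q₁] = iwg'c₀ + g q₁' + (1+α+iwg) g' q₁`. -/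
theorem stmt_11 (a : ℝ) (ha : 0 < a) (w : ℝ) (hw : w ≠ 0)
    (α : ℝ) (hα : α ∈ Set.Ioo (-1 : ℝ) 1) (hα0 : α ≠ 0)
    (g g' : ℝ → ℝ)
    (hgderiv : ∀ x ∈ Set.Icc 0 a, HasDerivAt g (g' x) x)
    (hgc : ContinuousOn g' (Set.Icc 0 a))
    (hg0 : g 0 = 0) (hgpos : ∀ x ∈ Set.Icc 0 a, 0 < g' x)
    (q₁ : ℝ → ℂ) (q₁' : ℝ → ℂ)
    (hq₁deriv : ∀ x ∈ Set.Icc 0 a, HasDerivAt q₁ (q₁' x) x)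
    (hq₁c : ContinuousOn q₁' (Set.Icc 0 a))
    (c₀ : ℂ)
    (h h' : ℝ → ℂ)
    (hhc : ContinuousOn h (Set.Icc 0 a))
    (hhderiv : ∀ x ∈ Set.Ioc 0 a, HasDerivAt h (h' x) x)
    (hh0 : h 0 = 0)
    (hODE : ∀ x ∈ Set.Ioc 0 a,
      h' x + I * (w : ℂ) * (g' x : ℂ) * h x
        + (α : ℂ) * c₀ * (g' x : ℂ) *
            ((1 - Complex.exp (-(I * (w : ℂ) * (g x : ℂ)))) / ((g x ^ (1 - α) : ℝ) : ℂ)) = 0)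
    (P : ℝ → ℂ)
    (hP : ∀ x, P x =
      (((g x ^ (1 + α) : ℝ) : ℂ) * q₁ x
        + c₀ * (1 - Complex.exp (-(I * (w : ℂ) * (g x : ℂ)))) * ((g x ^ α : ℝ) : ℂ)
        + h x) * Complex.exp (I * (w : ℂ) * (g x : ℂ))) :
    P a - P 0 =
      ∫ x in (0 : ℝ)..a,
        (I * (w : ℂ) * (g' x : ℂ) * c₀ + (g x : ℂ) * q₁' x
          + (1 + (α : ℂ) + I * (w : ℂ) * (g x : ℂ)) * (g' x : ℂ) * q₁ x)
          * ((g x ^ α : ℝ) : ℂ) * Complex.exp (I * (w : ℂ) * (g x : ℂ)) := by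
  obtain ⟨hαl, hαr⟩ := hα
  have h1α : (0:ℝ) < 1 + α := by linarith
  have hgcont : ContinuousOn g (Set.Icc 0 a) :=
    fun x hx => (hgderiv x hx).continuousAt.continuousWithinAt
  have hq₁cont : ContinuousOn q₁ (Set.Icc 0 a) :=
    fun x hx => (hq₁deriv x hx).continuousAt.continuousWithinAt
  have hmono : StrictMonoOn g (Set.Icc 0 a) := by
    apply strictMonoOn_of_deriv_pos (convex_Icc 0 a) hgcont
    intro x hx
    rw [interior_Icc] at hx
    rw [(hgderiv x (Set.Ioo_subset_Icc_self hx)).deriv]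
    exact hgpos x (Set.Ioo_subset_Icc_self hx)
  have hgpos' : ∀ x ∈ Set.Ioc 0 a, 0 < g x := by
    intro x hx
    have := hmono (Set.left_mem_Icc.2 ha.le) ⟨hx.1.le, hx.2⟩ hx.1
    rwa [hg0] at this
  have hgnonneg : ∀ x ∈ Set.Icc 0 a, 0 ≤ g x := by
    intro x hx
    rcases eq_or_lt_of_le hx.1 with h1|h1
    · rw [← h1, hg0]
    · exact (hgpos' x ⟨h1, hx.2⟩).le
  -- min and max of g' on [0,a]
  obtain ⟨cm, hcm, hcmmin⟩ := isCompact_Icc.exists_isMinOn (Set.nonempty_Icc.2 ha.le) hgc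
  obtain ⟨cM, hcM, hcMmax⟩ := isCompact_Icc.exists_isMaxOn (Set.nonempty_Icc.2 ha.le) hgc
  have hm : 0 < g' cm := hgpos cm hcm
  have hL : 0 < g' cM := hgpos cM hcM
  -- MVT bounds: m x ≤ g x ≤ L x on (0,a]
  have hgbound : ∀ x ∈ Set.Ioc 0 a, g' cm * x ≤ g x ∧ g x ≤ g' cM * x := by
    intro x hx
    obtain ⟨c, hc, hceq⟩ := exists_hasDerivAt_eq_slope g g' hx.1
      (hgcont.mono (Set.Icc_subset_Icc le_rfl hx.2))
      (fun y hy => hgderiv y ⟨hy.1.le, hy.2.le.trans hx.2⟩)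
    have hcIcc : c ∈ Set.Icc 0 a := ⟨hc.1.le, hc.2.le.trans hx.2⟩
    have hgx : g x = g' c * x := by
      rw [hg0, sub_zero, sub_zero, eq_div_iff hx.1.ne'] at hceq
      linarith [hceq]
    constructor
    · rw [hgx]
      exact mul_le_mul_of_nonneg_right (isMinOn_iff.1 hcmmin c hcIcc) hx.1.le
    · rw [hgx]
      exact mul_le_mul_of_nonneg_right (isMaxOn_iff.1 hcMmax c hcIcc) hx.1.le
  -- continuity of the exponential factors
  have hgCcont : ContinuousOn (fun x => ((g x : ℝ) : ℂ)) (Set.Icc 0 a) :=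
    Complex.continuous_ofReal.comp_continuousOn hgcont
  have hgC'cont : ContinuousOn (fun x => ((g' x : ℝ) : ℂ)) (Set.Icc 0 a) :=
    Complex.continuous_ofReal.comp_continuousOn hgc
  have hEcont : ContinuousOn (fun x => Complex.exp (I * (w : ℂ) * (g x : ℂ))) (Set.Icc 0 a) :=
    (continuousOn_const.mul hgCcont).cexp
  have hEmcont : ContinuousOn (fun x => Complex.exp (-(I * (w : ℂ) * (g x : ℂ)))) (Set.Icc 0 a) :=
    (continuousOn_const.mul hgCcont).neg.cexp
  have hEnorm : ∀ x : ℝ, ‖Complex.exp (I * (w : ℂ) * (g x : ℂ))‖ = 1 := by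
    intro x
    rw [Complex.norm_exp]
    simp
  -- the W function and its bound
  have hWcont : ContinuousOn (fun x => I * (w : ℂ) * (g' x : ℂ) * c₀ + (g x : ℂ) * q₁' x
      + (1 + (α : ℂ) + I * (w : ℂ) * (g x : ℂ)) * (g' x : ℂ) * q₁ x) (Set.Icc 0 a) :=
    (((continuousOn_const.mul hgC'cont).mul continuousOn_const).add (hgCcont.mul hq₁c)).add
      (((continuousOn_const.add (continuousOn_const.mul hgCcont)).mul hgC'cont).mul hq₁cont)
  obtain ⟨M, hM⟩ := isCompact_Icc.exists_bound_of_continuousOn hWcont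
  have hM0 : 0 ≤ M := le_trans (norm_nonneg _) (hM 0 (Set.left_mem_Icc.2 ha.le))
  -- integrability of the integrand
  have hFint : IntervalIntegrable (fun x =>
      (I * (w : ℂ) * (g' x : ℂ) * c₀ + (g x : ℂ) * q₁' x
        + (1 + (α : ℂ) + I * (w : ℂ) * (g x : ℂ)) * (g' x : ℂ) * q₁ x)
        * ((g x ^ α : ℝ) : ℂ) * Complex.exp (I * (w : ℂ) * (g x : ℂ))) MeasureTheory.volume 0 a := by
    rw [intervalIntegrable_iff_integrableOn_Ioc_of_le ha.le]
    have hbd : MeasureTheory.IntegrableOn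
        (fun x => M * (g' cm ^ α + g' cM ^ α) * x ^ α) (Set.Ioc 0 a) MeasureTheory.volume := by
      have := (intervalIntegral.intervalIntegrable_rpow' (show (-1:ℝ) < α by linarith)
        (a := 0) (b := a)).const_mul (M * (g' cm ^ α + g' cM ^ α))
      rwa [intervalIntegrable_iff_integrableOn_Ioc_of_le ha.le] at this
    apply hbd.mono'
    · apply ContinuousOn.aestronglyMeasurable _ measurableSet_Ioc
      have hgα : ContinuousOn (fun x => ((g x ^ α : ℝ) : ℂ)) (Set.Ioc 0 a) :=
        Complex.continuous_ofReal.comp_continuousOn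
          ((hgcont.mono Set.Ioc_subset_Icc_self).rpow_const
            (fun x hx => Or.inl (hgpos' x hx).ne'))
      exact ((hWcont.mono Set.Ioc_subset_Icc_self).mul hgα).mul
        (hEcont.mono Set.Ioc_subset_Icc_self)
    · rw [MeasureTheory.ae_restrict_iff' measurableSet_Ioc]
      filter_upwards with x hx
      have hxIcc : x ∈ Set.Icc 0 a := ⟨hx.1.le, hx.2⟩
      have hgx : 0 < g x := hgpos' x hx
      have hgb := hgbound x hx
      have hgα : g x ^ α ≤ (g' cm ^ α + g' cM ^ α) * x ^ α := by
        rcases lt_or_gt_of_ne hα0 with hneg | hpos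
        · have h1 : g x ^ α ≤ (g' cm * x) ^ α :=
            Real.rpow_le_rpow_of_nonpos (mul_pos hm hx.1) hgb.1 hneg.le
          rw [Real.mul_rpow hm.le hx.1.le] at h1
          nlinarith [Real.rpow_nonneg hx.1.le α, Real.rpow_nonneg hL.le α]
        · have h1 : g x ^ α ≤ (g' cM * x) ^ α :=
            Real.rpow_le_rpow hgx.le hgb.2 hpos.le
          rw [Real.mul_rpow hL.le hx.1.le] at h1
          nlinarith [Real.rpow_nonneg hx.1.le α, Real.rpow_nonneg hm.le α]
      calc ‖(I * (w : ℂ) * (g' x : ℂ) * c₀ + (g x : ℂ) * q₁' x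
            + (1 + (α : ℂ) + I * (w : ℂ) * (g x : ℂ)) * (g' x : ℂ) * q₁ x)
            * ((g x ^ α : ℝ) : ℂ) * Complex.exp (I * (w : ℂ) * (g x : ℂ))‖
          = ‖I * (w : ℂ) * (g' x : ℂ) * c₀ + (g x : ℂ) * q₁' x
            + (1 + (α : ℂ) + I * (w : ℂ) * (g x : ℂ)) * (g' x : ℂ) * q₁ x‖ * (g x ^ α) := by
            rw [norm_mul, norm_mul, hEnorm, Complex.norm_real, Real.norm_eq_abs,
              _root_.abs_of_nonneg (Real.rpow_nonneg hgx.le α), mul_one]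
        _ ≤ M * ((g' cm ^ α + g' cM ^ α) * x ^ α) :=
            mul_le_mul (hM x hxIcc) hgα (Real.rpow_nonneg hgx.le α) hM0
        _ = M * (g' cm ^ α + g' cM ^ α) * x ^ α := by ring
  -- continuity of P on [0,a]
  have hg1αcont : ContinuousOn (fun x => (g x ^ (1 + α) : ℝ)) (Set.Icc 0 a) :=
    hgcont.rpow_const (fun x hx => Or.inr h1α.le)
  have hPcont : ContinuousOn (fun x =>
      (((g x ^ (1 + α) : ℝ) : ℂ) * q₁ x
        + c₀ * (1 - Complex.exp (-(I * (w : ℂ) * (g x : ℂ)))) * ((g x ^ α : ℝ) : ℂ)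
        + h x) * Complex.exp (I * (w : ℂ) * (g x : ℂ))) (Set.Icc 0 a) := by
    apply ContinuousOn.mul _ hEcont
    apply ContinuousOn.add _ hhc
    apply ContinuousOn.add
      ((Complex.continuous_ofReal.comp_continuousOn hg1αcont).mul hq₁cont)
    -- middle term
    intro x hx
    rcases eq_or_ne x 0 with rfl | hx0
    · -- continuity at 0 via squeeze
      have hval : (fun x => c₀ * (1 - Complex.exp (-(I * (w : ℂ) * (g x : ℂ))))
          * ((g x ^ α : ℝ) : ℂ)) 0 = 0 := by
        simp [hg0]
      have hgtend : Filter.Tendsto g (nhdsWithin 0 (Set.Icc 0 a)) (nhds 0) := by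
        have := hgcont 0 hx
        rwa [ContinuousWithinAt, hg0] at this
      have hsmall : ∀ᶠ y in nhdsWithin 0 (Set.Icc 0 a), |w| * |g y| ≤ 1 := by
        have : Filter.Tendsto (fun y => |w| * |g y|) (nhdsWithin 0 (Set.Icc 0 a)) (nhds 0) := by
          have := (hgtend.abs).const_mul |w|
          simpa using this
        exact this.eventually_le_const one_pos
      have hbtend : Filter.Tendsto (fun y => ‖c₀‖ * (2 * |w|) * g y ^ (1 + α))
          (nhdsWithin 0 (Set.Icc 0 a)) (nhds 0) := by
        have h1 : Filter.Tendsto (fun y => (g y ^ (1 + α) : ℝ))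
            (nhdsWithin 0 (Set.Icc 0 a)) (nhds 0) := by
          have := hg1αcont 0 hx
          rw [ContinuousWithinAt] at this
          simpa [hg0, Real.zero_rpow h1α.ne'] using this
        simpa using h1.const_mul (‖c₀‖ * (2 * |w|))
      have hsq : Filter.Tendsto (fun x => c₀ * (1 - Complex.exp (-(I * (w : ℂ) * (g x : ℂ))))
          * ((g x ^ α : ℝ) : ℂ)) (nhdsWithin 0 (Set.Icc 0 a)) (nhds 0) := by
        apply squeeze_zero_norm' _ hbtend
        filter_upwards [hsmall, self_mem_nhdsWithin] with y hy hyIcc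
        have hgy : 0 ≤ g y := hgnonneg y hyIcc
        have habs : ‖(-(I * (w : ℂ) * (g y : ℂ)))‖ = |w| * |g y| := by
          simp [map_mul]
        have h2 : ‖1 - Complex.exp (-(I * (w : ℂ) * (g y : ℂ)))‖ ≤ 2 * (|w| * |g y|) := by
          rw [norm_sub_rev]
          calc ‖Complex.exp (-(I * (w : ℂ) * (g y : ℂ))) - 1‖
              ≤ 2 * ‖(-(I * (w : ℂ) * (g y : ℂ)))‖ :=
                Complex.norm_exp_sub_one_le (by rw [habs]; exact hy)
            _ = 2 * (|w| * |g y|) := by rw [habs]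
        calc ‖c₀ * (1 - Complex.exp (-(I * (w : ℂ) * (g y : ℂ)))) * ((g y ^ α : ℝ) : ℂ)‖
            = ‖c₀‖ * ‖1 - Complex.exp (-(I * (w : ℂ) * (g y : ℂ)))‖ * (g y ^ α) := by
              rw [norm_mul, norm_mul, Complex.norm_real, Real.norm_eq_abs,
                _root_.abs_of_nonneg (Real.rpow_nonneg hgy α)]
          _ ≤ ‖c₀‖ * (2 * (|w| * |g y|)) * (g y ^ α) := by
              apply mul_le_mul_of_nonneg_right _ (Real.rpow_nonneg hgy α)
              exact mul_le_mul_of_nonneg_left h2 (norm_nonneg c₀)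
          _ = ‖c₀‖ * (2 * |w|) * (g y * g y ^ α) := by
              rw [_root_.abs_of_nonneg hgy]; ring
          _ = ‖c₀‖ * (2 * |w|) * g y ^ (1 + α) := by
              rw [Real.rpow_add' hgy (by linarith : (1:ℝ) + α ≠ 0), Real.rpow_one]
      have : ContinuousWithinAt (fun x => c₀ * (1 - Complex.exp (-(I * (w : ℂ) * (g x : ℂ))))
          * ((g x ^ α : ℝ) : ℂ)) (Set.Icc 0 a) 0 := by
        rw [ContinuousWithinAt]
        simpa [hg0] using hsq
      exact this
    · -- continuity away from 0
      have hxIoc : x ∈ Set.Ioc 0 a := ⟨lt_of_le_of_ne hx.1 (Ne.symm hx0), hx.2⟩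
      have hgx : 0 < g x := hgpos' x hxIoc
      exact (continuousWithinAt_const.mul
        (continuousWithinAt_const.sub (hEmcont x hx))).mul
        ((Complex.continuous_ofReal.continuousAt.comp_continuousWithinAt
          ((hgcont x hx).rpow_const (Or.inl hgx.ne'))))
  -- derivative of P on (0,a)
  have hPderiv : ∀ x ∈ Set.Ioo 0 a, HasDerivAt (fun x =>
      (((g x ^ (1 + α) : ℝ) : ℂ) * q₁ x
        + c₀ * (1 - Complex.exp (-(I * (w : ℂ) * (g x : ℂ)))) * ((g x ^ α : ℝ) : ℂ)
        + h x) * Complex.exp (I * (w : ℂ) * (g x : ℂ)))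
      ((I * (w : ℂ) * (g' x : ℂ) * c₀ + (g x : ℂ) * q₁' x
        + (1 + (α : ℂ) + I * (w : ℂ) * (g x : ℂ)) * (g' x : ℂ) * q₁ x)
        * ((g x ^ α : ℝ) : ℂ) * Complex.exp (I * (w : ℂ) * (g x : ℂ))) x := by
    intro x hx
    have hxIcc : x ∈ Set.Icc 0 a := ⟨hx.1.le, hx.2.le⟩
    have hxIoc : x ∈ Set.Ioc 0 a := ⟨hx.1, hx.2.le⟩
    have hgx : 0 < g x := hgpos' x hxIoc
    have hgxC : (g x : ℂ) ≠ 0 := Complex.ofReal_ne_zero.2 hgx.ne'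
    have hgC : HasDerivAt (fun y => ((g y : ℝ) : ℂ)) ((g' x : ℝ) : ℂ) x :=
      (hgderiv x hxIcc).ofReal_comp
    have hu : HasDerivAt (fun y => I * (w : ℂ) * ((g y : ℝ) : ℂ)) (I * (w : ℂ) * (g' x : ℂ)) x :=
      hgC.const_mul (I * (w : ℂ))
    have hEd : HasDerivAt (fun y => Complex.exp (I * (w : ℂ) * (g y : ℂ)))
        (Complex.exp (I * (w : ℂ) * (g x : ℂ)) * (I * (w : ℂ) * (g' x : ℂ))) x := hu.cexp
    have hEmd : HasDerivAt (fun y => Complex.exp (-(I * (w : ℂ) * (g y : ℂ))))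
        (Complex.exp (-(I * (w : ℂ) * (g x : ℂ))) * (-(I * (w : ℂ) * (g' x : ℂ)))) x :=
      hu.neg.cexp
    have hd1 : HasDerivAt (fun y => (g y ^ (1 + α) : ℝ)) (g' x * (1 + α) * g x ^ (1 + α - 1)) x :=
      (hgderiv x hxIcc).rpow_const (Or.inl hgx.ne')
    have hd2 : HasDerivAt (fun y => (g y ^ α : ℝ)) (g' x * α * g x ^ (α - 1)) x :=
      (hgderiv x hxIcc).rpow_const (Or.inl hgx.ne')
    have hd1C := hd1.ofReal_comp
    have hd2C := hd2.ofReal_comp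
    have hPf := (((hd1C.mul (hq₁deriv x hxIcc)).add
        ((((hEmd.const_sub 1).const_mul c₀)).mul hd2C)).add (hhderiv x hxIoc)).mul hEd
    convert hPf using 1
    on_goal 1 => rfl
    on_goal 1 => rfl
    -- algebraic identity using the ODE
    have e4 : (((g x ^ (1 - α) : ℝ) : ℂ))⁻¹ = ((g x ^ (α - 1) : ℝ) : ℂ) := by
      rw [← Complex.ofReal_inv, ← Real.rpow_neg hgx.le]
      norm_num
    have hh' : h' x = -(I * (w : ℂ) * (g' x : ℂ) * h x)
        - (α : ℂ) * c₀ * (g' x : ℂ) *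
          ((1 - Complex.exp (-(I * (w : ℂ) * (g x : ℂ)))) * ((g x ^ (α - 1) : ℝ) : ℂ)) := by
      have hO := hODE x hxIoc
      rw [div_eq_mul_inv, e4] at hO
      linear_combination hO
    have E1 : ((g x ^ (1 + α - 1) : ℝ) : ℂ) = ((g x ^ α : ℝ) : ℂ) := by norm_num
    have E2 : ((g x ^ (1 + α) : ℝ) : ℂ) = (g x : ℂ) * ((g x ^ α : ℝ) : ℂ) := by
      rw [← Complex.ofReal_mul, Real.rpow_add hgx, Real.rpow_one]
    have E3 : ((g x ^ (α - 1) : ℝ) : ℂ) = ((g x ^ α : ℝ) : ℂ) / (g x : ℂ) := by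
      rw [eq_div_iff hgxC, ← Complex.ofReal_mul, ← Real.rpow_add_one hgx.ne']
      norm_num
    rw [hh']
    simp only [Pi.add_apply, Pi.mul_apply]
    push_cast
    rw [E1, E2, E3]
    field_simp
    ring
  rw [hP a, hP 0]
  exact (intervalIntegral.integral_eq_sub_of_hasDerivAt_of_le ha.le hPcont hPderiv hFint).symm
end
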